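/- For any graph G, the choice number of G is at most the Alon–Tarsi number of G: if P_G has a non-vanishing monomial x^η with η(v) < k for all vertices v, then for every assignment of lists L(v) of k real numbers to the vertices there is a proper colouring φ with φ(v) ∈ L(v) for all v. -/

import Mathlib

open MvPolynomial Finset

/- The graph polynomial `P_G = ∏_{uv ∈ E(G), u < v} (x_v - x_u)`. -/
open scoped Classical in
noncomputable def graphPoly {V : Type*} [Fintype V] [LinearOrder V]
    (G : SimpleGraph V) : MvPolynomial V ℝ :=
  ∏ p ∈ Finset.univ.filter (fun p : V × V => G.Adj p.1 p.2 ∧ p.1 < p.2),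
    (X p.2 - X p.1)

/- The signed graph polynomial `P_{G,σ} = ∏_{uv ∈ E(G), u < v} (x_v - σ(uv)·x_u)`. -/
open scoped Classical in
noncomputable def signedGraphPoly {V : Type*} [Fintype V] [LinearOrder V]
    (G : SimpleGraph V) (σ : Sym2 V → ℤ) : MvPolynomial V ℤ :=
  ∏ p ∈ Finset.univ.filter (fun p : V × V => G.Adj p.1 p.2 ∧ p.1 < p.2),
    (X p.2 - C (σ s(p.1, p.2)) * X p.1)

/- `H` is a minor of `G`: branch sets. -/
def SimpleGraph.IsMinor {W V : Type*} (H : SimpleGraph W) (G : SimpleGraph V) : Prop :=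
  ∃ f : W → Set V,
    (∀ w, (G.induce (f w)).Connected) ∧
    (∀ w₁ w₂, w₁ ≠ w₂ → Disjoint (f w₁) (f w₂)) ∧
    (∀ w₁ w₂, H.Adj w₁ w₂ → ∃ v₁ ∈ f w₁, ∃ v₂ ∈ f w₂, G.Adj v₁ v₂)

/- A graph is planar iff it has no `K₅` and no `K₃,₃` minor (Wagner's theorem). -/
def SimpleGraph.IsPlanar {V : Type*} (G : SimpleGraph V) : Prop :=
  ¬ SimpleGraph.IsMinor (completeGraph (Fin 5)) G ∧
  ¬ SimpleGraph.IsMinor (completeBipartiteGraph (Fin 3) (Fin 3)) G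

set_option linter.unusedSectionVars false

section CNaux

variable {V : Type*} [Fintype V] [DecidableEq V]

/-- The substitution `x_v := a` as `bind₁`. -/
noncomputable def subst (v : V) (a : ℝ) : MvPolynomial V ℝ →ₐ[ℝ] MvPolynomial V ℝ :=
  bind₁ (fun u => if u = v then C a else X u)

lemma subst_vars (v : V) (a : ℝ) (p : MvPolynomial V ℝ) : v ∉ (subst v a p).vars := by
  intro hv
  obtain ⟨i, -, hi⟩ := mem_vars_bind₁ _ _ hv
  by_cases h : i = v <;> simp [h, vars_X, vars_C] at hi
  exact h hi.symm

lemma coeff_subst_eq_zero (v : V) (a : ℝ) (p : MvPolynomial V ℝ) {m : V →₀ ℕ}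
    (hm : m v ≠ 0) : coeff m (subst v a p) = 0 := by
  by_contra h
  exact subst_vars v a p ((mem_vars v).mpr ⟨m, mem_support_iff.mpr h, Finsupp.mem_support_iff.mpr hm⟩)

lemma subst_totalDegree_le (v : V) (a : ℝ) (p : MvPolynomial V ℝ) :
    (subst v a p).totalDegree ≤ p.totalDegree := by
  conv_lhs => rw [p.as_sum, map_sum]
  refine (totalDegree_finset_sum _ _).trans (Finset.sup_le fun m hm => ?_)
  rw [subst, bind₁_monomial]
  refine (totalDegree_mul _ _).trans ?_
  rw [totalDegree_C, zero_add]
  refine le_trans (le_trans (totalDegree_finset_prod _ _) ?_) (le_totalDegree hm)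
  rw [Finsupp.sum]
  refine Finset.sum_le_sum fun i _ => ?_
  refine (totalDegree_pow _ _).trans ?_
  by_cases h : i = v <;> simp [h, totalDegree_X, totalDegree_C]

lemma subst_sub_dvd (v : V) (a : ℝ) (p : MvPolynomial V ℝ) :
    ∃ q : MvPolynomial V ℝ, p - subst v a p = (X v - C a) * q := by
  have h : p - subst v a p ∈ Ideal.span {(X v - C a : MvPolynomial V ℝ)} := by
    have key : (Ideal.Quotient.mk (Ideal.span {(X v - C a : MvPolynomial V ℝ)})).comp
        ((subst v a : MvPolynomial V ℝ →ₐ[ℝ] MvPolynomial V ℝ) : MvPolynomial V ℝ →+* MvPolynomial V ℝ)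
        = Ideal.Quotient.mk _ := by
      apply MvPolynomial.ringHom_ext
      · intro r; simp [subst]
      · intro u
        by_cases h : u = v
        · subst h
          simp only [RingHom.comp_apply, AlgHom.coe_toRingHom, subst, bind₁_X_right, if_pos rfl]
          rw [Ideal.Quotient.eq]
          simp only [if_true]
          rw [show (C a - X u : MvPolynomial V ℝ) = -(X u - C a) by ring]
          exact neg_mem (Ideal.subset_span rfl)
        · simp [subst, h]
    have := RingHom.congr_fun key p
    simp only [RingHom.comp_apply, AlgHom.coe_toRingHom] at this
    rw [← Ideal.Quotient.mk_eq_mk_iff_sub_mem]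
    exact this.symm ▸ rfl
  rw [Ideal.mem_span_singleton] at h
  obtain ⟨q, hq⟩ := h
  exact ⟨q, hq⟩

lemma mul_deg (v : V) (a : ℝ) {q : MvPolynomial V ℝ} (hq : q ≠ 0) :
    q.totalDegree + 1 ≤ ((X v - C a) * q).totalDegree := by
  obtain ⟨m, hm, hms⟩ := Finset.exists_mem_eq_sup q.support
    (support_nonempty.mpr hq) (fun s => s.sum fun _ e => e)
  have hsum : ((Finsupp.single v 1 + m).sum fun _ e => e) = q.totalDegree + 1 := by
    rw [Finsupp.sum_add_index' (h := fun _ e => e) (fun _ => rfl) (fun _ _ _ => rfl),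
      Finsupp.sum_single_index rfl, totalDegree, hms]
    omega
  have hz : coeff (Finsupp.single v 1 + m) q = 0 := by
    apply coeff_eq_zero_of_totalDegree_lt
    have hr : (∑ i ∈ ((Finsupp.single v 1 + m : V →₀ ℕ)).support,
        (Finsupp.single v 1 + m : V →₀ ℕ) i)
      = ((Finsupp.single v 1 + m : V →₀ ℕ).sum fun _ e => e) := rfl
    rw [hr, hsum]
    exact Nat.lt_succ_self _
  have hco : coeff (Finsupp.single v 1 + m) ((X v - C a) * q) = coeff m q := by
    rw [sub_mul, coeff_sub, coeff_X_mul, coeff_C_mul, hz, mul_zero, sub_zero]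
  have hmem : (Finsupp.single v 1 + m) ∈ ((X v - C a) * q).support := by
    rw [mem_support_iff, hco]
    exact mem_support_iff.mp hm
  calc q.totalDegree + 1 = ((Finsupp.single v 1 + m).sum fun _ e => e) := hsum.symm
    _ ≤ _ := le_totalDegree hmem

theorem CN : ∀ (n : ℕ) (p : MvPolynomial V ℝ) (η : V →₀ ℕ),
    (η.sum fun _ e => e) = n → p.totalDegree ≤ n → coeff η p ≠ 0 →
    ∀ S : V → Finset ℝ, (∀ v, η v < (S v).card) →
    ∃ x : V → ℝ, (∀ v, x v ∈ S v) ∧ eval x p ≠ 0 := by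
  intro n
  induction n with
  | zero =>
    intro p η hηs hdeg hc S hS
    have hη0 : η = 0 := by
      ext v
      by_contra h
      have hv : v ∈ η.support := Finsupp.mem_support_iff.mpr h
      have := Finset.sum_eq_zero_iff.mp hηs v hv
      exact h this
    have hx : ∀ v, ∃ y, y ∈ S v := fun v =>
      (Finset.card_pos.mp (by simpa [hη0] using hS v)).imp (fun _ h => h)
    choose x hxS using hx
    refine ⟨x, hxS, ?_⟩
    have hpC : p = C (coeff 0 p) := by
      ext m
      by_cases hm : m = 0
      · simp [hm]
      · rw [coeff_C, if_neg (Ne.symm hm)]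
        by_contra h
        have := le_totalDegree (mem_support_iff.mpr h)
        rw [Nat.le_zero] at hdeg
        have hmz : (m.sum fun _ e => e) = 0 := Nat.le_zero.mp (hdeg ▸ this)
        apply hm
        ext v
        by_contra h2
        exact h2 (Finset.sum_eq_zero_iff.mp hmz v (Finsupp.mem_support_iff.mpr h2))
    rw [hpC, eval_C]
    simpa [hη0] using hc
  | succ n ih =>
    intro p η hηs hdeg hc S hS
    -- find a variable with positive exponent
    have hsupp : η.support.Nonempty := by
      rw [Finset.nonempty_iff_ne_empty]
      intro h
      rw [Finsupp.sum, h, Finset.sum_empty] at hηs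
      exact Nat.succ_ne_zero n hηs.symm
    obtain ⟨v, hv⟩ := hsupp
    have hηv : η v ≠ 0 := Finsupp.mem_support_iff.mp hv
    have hSv : (S v).Nonempty := Finset.card_pos.mp (lt_of_le_of_lt (Nat.zero_le _) (hS v))
    obtain ⟨a, ha⟩ := hSv
    obtain ⟨q, hq⟩ := subst_sub_dvd v a p
    have hqne : q ≠ 0 := by
      intro h
      rw [h, mul_zero, sub_eq_zero] at hq
      exact hc (hq ▸ coeff_subst_eq_zero v a p hηv)
    have htq : q.totalDegree ≤ n := by
      have h1 := mul_deg v a hqne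
      rw [← hq] at h1
      have h2 : (p - subst v a p).totalDegree ≤ n + 1 :=
        (totalDegree_sub _ _).trans (max_le hdeg ((subst_totalDegree_le v a p).trans hdeg))
      omega
    set η' := η - Finsupp.single v 1 with hη'
    have hle : Finsupp.single v 1 ≤ η := by
      rw [Finsupp.single_le_iff]
      omega
    have heq : η' + Finsupp.single v 1 = η := tsub_add_cancel_of_le hle
    have hsum' : (η'.sum fun _ e => e) = n := by
      have h2 := Finsupp.sum_add_index' (f := η') (g := Finsupp.single v 1)
        (h := fun _ e => e) (fun _ => rfl) (fun _ _ _ => rfl)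
      rw [heq, hηs, Finsupp.sum_single_index rfl] at h2
      omega
    have hcoeffq : coeff η' q = coeff η p := by
      have hp : p = (X v - C a) * q + subst v a p := by
        rw [← hq]; ring
      rw [hp, coeff_add, coeff_subst_eq_zero v a p hηv, add_zero, sub_mul, coeff_sub,
        coeff_C_mul]
      have hzero : coeff η q = 0 := by
        apply coeff_eq_zero_of_totalDegree_lt
        have hr : (∑ i ∈ η.support, η i) = (η.sum fun _ e => e) := rfl
        rw [hr, hηs]
        omega
      rw [hzero, mul_zero, sub_zero]
      conv_rhs => rw [← heq, add_comm]
      rw [coeff_X_mul]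
    have hcq : coeff η' q ≠ 0 := hcoeffq ▸ hc
    set S' : V → Finset ℝ := fun u => if u = v then (S v).erase a else S u with hS'def
    have hS' : ∀ u, η' u < (S' u).card := by
      intro u
      by_cases h : u = v
      · subst h
        simp only [hS'def, if_pos rfl, Finset.card_erase_of_mem ha, hη',
          Finsupp.coe_tsub, Pi.sub_apply, Finsupp.single_eq_same]
        have := hS u
        omega
      · simp only [hS'def, if_neg h, hη', Finsupp.coe_tsub, Pi.sub_apply,
          Finsupp.single_eq_of_ne' (Ne.symm h), Nat.sub_zero]
        exact hS u
    obtain ⟨x, hx, hxq⟩ := ih q η' hsum' htq hcq S' hS'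
    have hxv : x v ∈ (S v).erase a := by simpa [hS'def] using hx v
    have hxva : x v ≠ a := Finset.ne_of_mem_erase hxv
    have hxvS : x v ∈ S v := Finset.mem_of_mem_erase hxv
    have hxS : ∀ u, x u ∈ S u := by
      intro u
      by_cases h : u = v
      · subst h; exact hxvS
      · simpa [hS'def, if_neg h] using hx u
    have hsubst_eval : eval x (subst v a p) = eval (Function.update x v a) p := by
      have h1 : eval x (subst v a p)
          = eval (fun i => eval x (if i = v then C a else X i)) p := by
        exact eval₂Hom_bind₁ (RingHom.id ℝ) x _ p
      have h2 : (fun i => eval x (if i = v then C a else X i)) = Function.update x v a := by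
        funext i
        by_cases h : i = v
        · subst h; simp [Function.update]
        · simp [Function.update, h]
      rw [h1, h2]
    have heval : eval x p = (x v - a) * eval x q + eval (Function.update x v a) p := by
      have := congrArg (eval x) hq
      simp only [map_sub, map_mul, eval_X, eval_C] at this
      rw [hsubst_eval] at this
      linarith
    by_cases hxp : eval x p = 0
    · refine ⟨Function.update x v a, ?_, ?_⟩
      · intro u
        by_cases h : u = v
        · subst h; simp [Function.update, ha]
        · simpa [Function.update, h] using hxS u
      · rw [hxp] at heval
        intro h0
        rw [h0, add_zero] at heval
        exact mul_ne_zero (sub_ne_zero_of_ne hxva) hxq heval.symm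
    · exact ⟨x, hxS, hxp⟩

end CNaux

/- If `P_G` has a non-vanishing monomial `x^η` with all exponents `< k`, then `G` is
`k`-choosable. -/
theorem stmt_7 {V : Type*} [Fintype V] [LinearOrder V] (G : SimpleGraph V)
    (k : ℕ) (η : V →₀ ℕ) (hη : ∀ v, η v < k)
    (hc : MvPolynomial.coeff η (graphPoly G) ≠ 0)
    (L : V → Finset ℝ) (hL : ∀ v, (L v).card = k) :
    ∃ φ : V → ℝ, (∀ v, φ v ∈ L v) ∧ ∀ u v, G.Adj u v → φ u ≠ φ v := by
  classical
  set E := Finset.univ.filter (fun p : V × V => G.Adj p.1 p.2 ∧ p.1 < p.2) with hE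
  have hhom : (graphPoly G).IsHomogeneous E.card := by
    have h1 : (graphPoly G).IsHomogeneous (∑ _p ∈ E, 1) := by
      apply MvPolynomial.IsHomogeneous.prod
      intro p _
      exact (isHomogeneous_X ℝ p.2).sub (isHomogeneous_X ℝ p.1)
    simpa using h1
  have hdeg : (η.sum fun _ e => e) = E.card := by
    have := hhom hc
    simpa [Finsupp.weight_apply, smul_eq_mul, Finsupp.sum] using this
  have htd : (graphPoly G).totalDegree ≤ E.card := hhom.totalDegree_le
  have hsub : ∀ v, ∃ S : Finset ℝ, S ⊆ L v ∧ S.card = η v + 1 := by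
    intro v
    exact Finset.exists_subset_card_eq (s := L v) (n := η v + 1) (by rw [hL v]; exact hη v)
  choose S hSsub hScard using hsub
  obtain ⟨x, hx, hev⟩ := CN E.card (graphPoly G) η hdeg htd hc S
    (fun v => by rw [hScard v]; omega)
  refine ⟨x, fun v => hSsub v (hx v), ?_⟩
  intro u w hadj hne
  apply hev
  have huw : u ≠ w := G.ne_of_adj hadj
  simp only [graphPoly, map_prod, map_sub, eval_X] at *
  rcases lt_or_gt_of_ne huw with h | h
  · refine Finset.prod_eq_zero (i := (u, w)) ?_ ?_
    · simp only [Finset.mem_filter, Finset.mem_univ, true_and]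
      exact ⟨hadj, h⟩
    · simp [hne]
  · refine Finset.prod_eq_zero (i := (w, u)) ?_ ?_
    · simp only [Finset.mem_filter, Finset.mem_univ, true_and]
      exact ⟨hadj.symm, h⟩
    · simp [hne]
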